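/- For every natural number k, the largest possible index [ℤ² : L] over finite-index subgroups L ≤ ℤ² such that S'_{2,k} + L = ℤ² is exactly ⌊(k+2)²/3⌋, and this maximum is attained. -/

import Mathlib

namespace Stmt12


/-- embedding of ℕ×ℕ into ℤ×ℤ -/
def em (x : ℕ × ℕ) : ℤ × ℤ := ((x.1 : ℤ), (x.2 : ℤ))

section Upper

variable (L : AddSubgroup (ℤ × ℤ)) (k : ℕ)
variable (cov : ∀ p : ℤ × ℤ, ∃ q : ℤ × ℤ, 0 ≤ q.1 ∧ 0 ≤ q.2 ∧ q.1 + q.2 ≤ (k : ℤ) ∧ p - q ∈ L)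

section WithCov
include cov

lemma hexN (p : ℤ × ℤ) : ∃ d : ℕ, ∃ x : ℕ × ℕ, x.1 + x.2 = d ∧ em x - p ∈ L := by
  obtain ⟨q, hq1, hq2, hq3, hqL⟩ := cov p
  refine ⟨q.1.toNat + q.2.toNat, (q.1.toNat, q.2.toNat), rfl, ?_⟩
  have h1 : ((q.1.toNat : ℤ), (q.2.toNat : ℤ)) = q := by
    ext <;> simp [Int.toNat_of_nonneg, hq1, hq2]
  have : em (q.1.toNat, q.2.toNat) - p = -(p - q) := by
    rw [em, h1]; ring
  rw [this]; exact neg_mem hqL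

noncomputable def NN (p : ℤ × ℤ) : ℕ :=
  @Nat.find _ (Classical.decPred _) (hexN L k cov p)

lemma NN_le (x : ℕ × ℕ) {p : ℤ × ℤ} (h : em x - p ∈ L) : NN L k cov p ≤ x.1 + x.2 :=
  @Nat.find_le _ _ (Classical.decPred _) _ ⟨x, rfl, h⟩

lemma hexJ (p : ℤ × ℤ) : ∃ j : ℕ, ∃ i : ℕ, i + j = NN L k cov p ∧ em (i, j) - p ∈ L := by
  obtain ⟨x, hx, hm⟩ := @Nat.find_spec _ (Classical.decPred _) (hexN L k cov p)
  exact ⟨x.2, x.1, hx, by rwa [show ((x.1 : ℕ), (x.2 : ℕ)) = x from rfl]⟩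

noncomputable def JJ (p : ℤ × ℤ) : ℕ :=
  @Nat.find _ (Classical.decPred _) (hexJ L k cov p)

lemma JJ_le (x : ℕ × ℕ) {p : ℤ × ℤ} (h : em x - p ∈ L) (hs : x.1 + x.2 = NN L k cov p) :
    JJ L k cov p ≤ x.2 :=
  @Nat.find_le _ _ (Classical.decPred _) _
    ⟨x.1, hs, by rwa [show ((x.1 : ℕ), (x.2 : ℕ)) = x from rfl]⟩

lemma mem_trans {a b : ℤ × ℤ} (hab : a - b ∈ L) {x : ℕ × ℕ} (hx : em x - a ∈ L) :
    em x - b ∈ L := by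
  have : em x - b = (em x - a) + (a - b) := by ring
  rw [this]; exact add_mem hx hab

lemma NN_congr {p q : ℤ × ℤ} (h : p - q ∈ L) : NN L k cov p = NN L k cov q := by
  have hqp : q - p ∈ L := by have := neg_mem h; rwa [neg_sub] at this
  apply le_antisymm
  · exact @Nat.find_mono _ _ (Classical.decPred _) (Classical.decPred _)
      (fun n ⟨x, hx, hm⟩ => ⟨x, hx, mem_trans L k cov hqp hm⟩) _ _
  · exact @Nat.find_mono _ _ (Classical.decPred _) (Classical.decPred _)
      (fun n ⟨x, hx, hm⟩ => ⟨x, hx, mem_trans L k cov h hm⟩) _ _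

lemma JJ_congr {p q : ℤ × ℤ} (h : p - q ∈ L) : JJ L k cov p = JJ L k cov q := by
  have hqp : q - p ∈ L := by have := neg_mem h; rwa [neg_sub] at this
  have hN := NN_congr L k cov h
  apply le_antisymm
  · exact @Nat.find_mono _ _ (Classical.decPred _) (Classical.decPred _)
      (fun n ⟨i, hi, hm⟩ => ⟨i, by omega, mem_trans L k cov hqp hm⟩) _ _
  · exact @Nat.find_mono _ _ (Classical.decPred _) (Classical.decPred _)
      (fun n ⟨i, hi, hm⟩ => ⟨i, by omega, mem_trans L k cov h hm⟩) _ _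

noncomputable def rep (p : ℤ × ℤ) : ℕ × ℕ :=
  (NN L k cov p - JJ L k cov p, JJ L k cov p)

lemma rep_spec (p : ℤ × ℤ) :
    em (rep L k cov p) - p ∈ L ∧ (rep L k cov p).1 + (rep L k cov p).2 = NN L k cov p := by
  obtain ⟨i, hi, hm⟩ := @Nat.find_spec _ (Classical.decPred _) (hexJ L k cov p)
  have hi' : i + JJ L k cov p = NN L k cov p := hi
  have h1 : (rep L k cov p).1 = i := by
    simp only [rep]
    show NN L k cov p - JJ L k cov p = i
    omega
  have h2 : (rep L k cov p).2 = JJ L k cov p := rfl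
  constructor
  · have he : rep L k cov p = (i, JJ L k cov p) := Prod.ext h1 h2
    rw [he]; exact hm
  · simp only [rep]; omega

lemma rep_congr {p q : ℤ × ℤ} (h : p - q ∈ L) : rep L k cov p = rep L k cov q := by
  simp only [rep, NN_congr L k cov h, JJ_congr L k cov h]

/-- the set of minimal representatives -/
def RR : Set (ℕ × ℕ) := {x : ℕ × ℕ | rep L k cov (em x) = x}

lemma rep_mem_RR (p : ℤ × ℤ) : rep L k cov p ∈ RR L k cov :=
  rep_congr L k cov ((rep_spec L k cov p).1)

lemma RR_unique {a b : ℕ × ℕ} (ha : a ∈ RR L k cov) (hb : b ∈ RR L k cov)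
    (h : em a - em b ∈ L) : a = b := by
  have := rep_congr L k cov h
  rwa [ha, hb] at this

lemma NN_of_mem {a : ℕ × ℕ} (ha : a ∈ RR L k cov) : NN L k cov (em a) = a.1 + a.2 := by
  have h := (rep_spec L k cov (em a)).2
  rw [ha] at h; omega

lemma JJ_of_mem {a : ℕ × ℕ} (ha : a ∈ RR L k cov) : JJ L k cov (em a) = a.2 := by
  have : (rep L k cov (em a)).2 = a.2 := by rw [ha]
  exact this ▸ rfl

lemma RR_sum_le {a : ℕ × ℕ} (ha : a ∈ RR L k cov) : a.1 + a.2 ≤ k := by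
  obtain ⟨q, hq1, hq2, hq3, hqL⟩ := cov (em a)
  have h1 : ((q.1.toNat : ℤ), (q.2.toNat : ℤ)) = q := by
    ext <;> simp [Int.toNat_of_nonneg, hq1, hq2]
  have hmem : em (q.1.toNat, q.2.toNat) - em a ∈ L := by
    have : em (q.1.toNat, q.2.toNat) - em a = -(em a - q) := by rw [em, h1]; ring
    rw [this]; exact neg_mem hqL
  have h2 := NN_le L k cov _ hmem
  rw [NN_of_mem L k cov ha] at h2
  have hsum : (q.1.toNat : ℤ) + (q.2.toNat : ℤ) ≤ (k : ℤ) := by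
    rw [Int.toNat_of_nonneg hq1, Int.toNat_of_nonneg hq2]; exact hq3
  have : q.1.toNat + q.2.toNat ≤ k := by exact_mod_cast hsum
  omega

lemma zero_mem_RR : (0, 0) ∈ RR L k cov := by
  have h0 : em ((0:ℕ), (0:ℕ)) - em ((0:ℕ), (0:ℕ)) ∈ L := by
    rw [sub_self]; exact zero_mem L
  have hN : NN L k cov (em ((0:ℕ),(0:ℕ))) = 0 := Nat.le_zero.mp (NN_le L k cov _ h0)
  have hJ : JJ L k cov (em ((0:ℕ),(0:ℕ))) = 0 :=
    Nat.le_zero.mp (JJ_le L k cov _ h0 (by omega))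
  show rep L k cov _ = _
  simp only [rep, hN, hJ]

lemma down1 {a : ℕ × ℕ} (ha : a ∈ RR L k cov) (hpos : 0 < a.1) :
    (a.1 - 1, a.2) ∈ RR L k cov := by
  set p' : ℤ × ℤ := em a - (1, 0) with hp'
  set b := rep L k cov p' with hb
  have hbR : b ∈ RR L k cov := rep_mem_RR L k cov p'
  have hbm : em b - p' ∈ L := (rep_spec L k cov p').1
  have hself' : em (a.1 - 1, a.2) = p' := by
    simp only [em, hp', Prod.ext_iff, Prod.fst_sub, Prod.snd_sub]
    constructor
    · push_cast [Nat.cast_sub hpos]; ring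
    · push_cast; ring
  have hself : em (a.1 - 1, a.2) - p' ∈ L := by rw [hself']; rw [sub_self]; exact zero_mem L
  have hlift : em (b.1 + 1, b.2) - em a ∈ L := by
    have heq : em (b.1 + 1, b.2) - em a = em b - p' := by
      simp only [em, hp', Prod.ext_iff, Prod.fst_sub, Prod.snd_sub]
      constructor
      · push_cast; ring
      · push_cast; ring
    rw [heq]; exact hbm
  have h1 : a.1 + a.2 ≤ b.1 + 1 + b.2 := by
    have := NN_le L k cov _ hlift
    rwa [NN_of_mem L k cov ha] at this
  have h2 : NN L k cov p' ≤ (a.1 - 1) + a.2 := NN_le L k cov _ hself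
  have h3 : b.1 + b.2 = NN L k cov p' := by
    rw [← NN_congr L k cov hbm]; exact (NN_of_mem L k cov hbR).symm
  have hJ1 : JJ L k cov p' ≤ a.2 := JJ_le L k cov (a.1 - 1, a.2) hself (by omega)
  have hJb : b.2 = JJ L k cov p' := by
    rw [← JJ_congr L k cov hbm]; exact (JJ_of_mem L k cov hbR).symm
  have hJ2 : a.2 ≤ b.2 := by
    have := JJ_le L k cov (b.1 + 1, b.2) hlift (by rw [NN_of_mem L k cov ha]; omega)
    rwa [JJ_of_mem L k cov ha] at this
  have hfin : b = (a.1 - 1, a.2) := Prod.ext (by omega) (by omega)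
  rw [← hfin]; exact hbR

lemma down2 {a : ℕ × ℕ} (ha : a ∈ RR L k cov) (hpos : 0 < a.2) :
    (a.1, a.2 - 1) ∈ RR L k cov := by
  set p' : ℤ × ℤ := em a - (0, 1) with hp'
  set b := rep L k cov p' with hb
  have hbR : b ∈ RR L k cov := rep_mem_RR L k cov p'
  have hbm : em b - p' ∈ L := (rep_spec L k cov p').1
  have hself' : em (a.1, a.2 - 1) = p' := by
    simp only [em, hp', Prod.ext_iff, Prod.fst_sub, Prod.snd_sub]
    constructor
    · push_cast; ring
    · push_cast [Nat.cast_sub hpos]; ring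
  have hself : em (a.1, a.2 - 1) - p' ∈ L := by rw [hself']; rw [sub_self]; exact zero_mem L
  have hlift : em (b.1, b.2 + 1) - em a ∈ L := by
    have heq : em (b.1, b.2 + 1) - em a = em b - p' := by
      simp only [em, hp', Prod.ext_iff, Prod.fst_sub, Prod.snd_sub]
      constructor
      · push_cast; ring
      · push_cast; ring
    rw [heq]; exact hbm
  have h1 : a.1 + a.2 ≤ b.1 + (b.2 + 1) := by
    have := NN_le L k cov _ hlift
    rwa [NN_of_mem L k cov ha] at this
  have h2 : NN L k cov p' ≤ a.1 + (a.2 - 1) := NN_le L k cov _ hself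
  have h3 : b.1 + b.2 = NN L k cov p' := by
    rw [← NN_congr L k cov hbm]; exact (NN_of_mem L k cov hbR).symm
  have hJ1 : JJ L k cov p' ≤ a.2 - 1 := JJ_le L k cov (a.1, a.2 - 1) hself (by omega)
  have hJb : b.2 = JJ L k cov p' := by
    rw [← JJ_congr L k cov hbm]; exact (JJ_of_mem L k cov hbR).symm
  have hJ2 : a.2 ≤ b.2 + 1 := by
    have := JJ_le L k cov (b.1, b.2 + 1) hlift (by rw [NN_of_mem L k cov ha]; omega)
    rwa [JJ_of_mem L k cov ha] at this
  have hfin : b = (a.1, a.2 - 1) := Prod.ext (by omega) (by omega)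
  rw [← hfin]; exact hbR

lemma downTo {a : ℕ × ℕ} (ha : a ∈ RR L k cov) {i j : ℕ} (hi : i ≤ a.1) (hj : j ≤ a.2) :
    (i, j) ∈ RR L k cov := by
  have step1 : ∀ d : ℕ, ∀ b : ℕ × ℕ, b ∈ RR L k cov → b.1 = i + d → (i, b.2) ∈ RR L k cov := by
    intro d
    induction d with
    | zero => intro b hb h; have he : b = (i, b.2) := Prod.ext (by omega) rfl; rwa [← he]
    | succ n ih =>
      intro b hb h
      have hd := down1 L k cov hb (by omega)
      exact ih (b.1 - 1, b.2) hd (by dsimp only; omega)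
  have step2 : ∀ d : ℕ, ∀ b : ℕ × ℕ, b ∈ RR L k cov → b.2 = j + d → (b.1, j) ∈ RR L k cov := by
    intro d
    induction d with
    | zero => intro b hb h; have he : b = (b.1, j) := Prod.ext rfl (by omega); rwa [← he]
    | succ n ih =>
      intro b hb h
      have hd := down2 L k cov hb (by omega)
      exact ih (b.1, b.2 - 1) hd (by dsimp only; omega)
  have h1 : (i, a.2) ∈ RR L k cov := step1 (a.1 - i) a ha (by omega)
  have h2 := step2 (a.2 - j) (i, a.2) h1 (by dsimp only; omega)
  exact h2


lemma hexW : ∃ i : ℕ, (i, (0:ℕ)) ∉ RR L k cov := by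
  refine ⟨k + 1, fun hmem => ?_⟩
  have := RR_sum_le L k cov hmem
  simp at this

noncomputable def ww : ℕ := @Nat.find _ (Classical.decPred _) (hexW L k cov)

lemma hexH : ∃ j : ℕ, ((0:ℕ), j) ∉ RR L k cov := by
  refine ⟨k + 1, fun hmem => ?_⟩
  have := RR_sum_le L k cov hmem
  simp at this

noncomputable def hh : ℕ := @Nat.find _ (Classical.decPred _) (hexH L k cov)

lemma row_mem {i : ℕ} (h : i < ww L k cov) : (i, (0:ℕ)) ∈ RR L k cov :=
  not_not.mp (@Nat.find_min _ (Classical.decPred _) (hexW L k cov) _ h)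

lemma col_mem {j : ℕ} (h : j < hh L k cov) : ((0:ℕ), j) ∈ RR L k cov :=
  not_not.mp (@Nat.find_min _ (Classical.decPred _) (hexH L k cov) _ h)

lemma ww_not_mem : ((ww L k cov), (0:ℕ)) ∉ RR L k cov :=
  @Nat.find_spec _ (Classical.decPred _) (hexW L k cov)

lemma hh_not_mem : ((0:ℕ), (hh L k cov)) ∉ RR L k cov :=
  @Nat.find_spec _ (Classical.decPred _) (hexH L k cov)

lemma ww_pos : 0 < ww L k cov := by
  rcases Nat.eq_zero_or_pos (ww L k cov) with h | h
  · exfalso; apply ww_not_mem L k cov; rw [h]; exact zero_mem_RR L k cov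
  · exact h

lemma hh_pos : 0 < hh L k cov := by
  rcases Nat.eq_zero_or_pos (hh L k cov) with h | h
  · exfalso; apply hh_not_mem L k cov; rw [h]; exact zero_mem_RR L k cov
  · exact h

lemma bound1 {a : ℕ × ℕ} (ha : a ∈ RR L k cov) : a.1 < ww L k cov := by
  by_contra hcon
  exact ww_not_mem L k cov (downTo L k cov ha (by omega) (by omega))

lemma bound2 {a : ℕ × ℕ} (ha : a ∈ RR L k cov) : a.2 < hh L k cov := by
  by_contra hcon
  exact hh_not_mem L k cov (downTo L k cov ha (by omega) (by omega))

/-- column-top lemma: at the top of a column, the representative lies in row 0,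
yielding a lattice vector. -/
lemma nu_col {i c : ℕ} (hi : i < ww L k cov) (hc : 0 < c)
    (hnot : (i, c) ∉ RR L k cov) (hbelow : (i, c - 1) ∈ RR L k cov) :
    ∃ t : ℕ, t < ww L k cov ∧ (t, (0:ℕ)) ∈ RR L k cov ∧
      (((i:ℤ) - (t:ℤ), (c:ℤ)) : ℤ × ℤ) ∈ L := by
  set b := rep L k cov (em (i, c)) with hbdef
  have hbR : b ∈ RR L k cov := rep_mem_RR L k cov _
  have hbm : em b - em (i, c) ∈ L := (rep_spec L k cov (em (i, c))).1
  by_cases hb2 : 0 < b.2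
  · exfalso
    have hp : (b.1, b.2 - 1) ∈ RR L k cov := down2 L k cov hbR hb2
    have hq : (i, c - 1) ∈ RR L k cov := hbelow
    have hmem : em (i, c - 1) - em (b.1, b.2 - 1) ∈ L := by
      have heq : em (i, c - 1) - em (b.1, b.2 - 1) = -(em b - em (i, c)) := by
        simp only [em, Prod.ext_iff, Prod.fst_sub, Prod.snd_sub, Prod.fst_neg, Prod.snd_neg]
        constructor
        · push_cast; ring
        · push_cast [Nat.cast_sub hc, Nat.cast_sub hb2]; ring
      rw [heq]; exact neg_mem hbm
    have := RR_unique L k cov hq hp hmem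
    have h1 : i = b.1 := congrArg Prod.fst this
    have h2 : c - 1 = b.2 - 1 := congrArg Prod.snd this
    -- then b = (i,c): contradiction since (i,c) ∉ RR but b ∈ RR... need c = b.2
    -- from sums: we know NN (em (i,c)) = b.1 + b.2 ≤ i + c, and b.2 ≥ 1, c ≥ 1
    -- h2 gives c = b.2 (both ≥ 1)
    have hc2 : c = b.2 := by omega
    have : b = (i, c) := Prod.ext h1.symm hc2.symm
    rw [this] at hbR
    exact hnot hbR
  · have hb20 : b.2 = 0 := by omega
    refine ⟨b.1, bound1 L k cov hbR, ?_, ?_⟩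
    · have : b = (b.1, (0:ℕ)) := Prod.ext rfl hb20
      rwa [← this]
    · have heq : (((i:ℤ) - (b.1:ℤ), (c:ℤ)) : ℤ × ℤ) = -(em b - em (i, c)) := by
        simp only [em, Prod.ext_iff, Prod.fst_sub, Prod.snd_sub, Prod.fst_neg, Prod.snd_neg]
        constructor
        · push_cast; ring
        · rw [hb20]; push_cast; ring
      rw [heq]; exact neg_mem hbm

/-- row-end lemma (transpose of nu_col) -/
lemma nu_row {j c : ℕ} (hj : j < hh L k cov) (hc : 0 < c)
    (hnot : (c, j) ∉ RR L k cov) (hbelow : (c - 1, j) ∈ RR L k cov) :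
    ∃ u : ℕ, u < hh L k cov ∧ ((0:ℕ), u) ∈ RR L k cov ∧
      (((c:ℤ), (j:ℤ) - (u:ℤ)) : ℤ × ℤ) ∈ L := by
  set b := rep L k cov (em (c, j)) with hbdef
  have hbR : b ∈ RR L k cov := rep_mem_RR L k cov _
  have hbm : em b - em (c, j) ∈ L := (rep_spec L k cov (em (c, j))).1
  by_cases hb1 : 0 < b.1
  · exfalso
    have hp : (b.1 - 1, b.2) ∈ RR L k cov := down1 L k cov hbR hb1
    have hq : (c - 1, j) ∈ RR L k cov := hbelow
    have hmem : em (c - 1, j) - em (b.1 - 1, b.2) ∈ L := by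
      have heq : em (c - 1, j) - em (b.1 - 1, b.2) = -(em b - em (c, j)) := by
        simp only [em, Prod.ext_iff, Prod.fst_sub, Prod.snd_sub, Prod.fst_neg, Prod.snd_neg]
        constructor
        · push_cast [Nat.cast_sub hc, Nat.cast_sub hb1]; ring
        · push_cast; ring
      rw [heq]; exact neg_mem hbm
    have := RR_unique L k cov hq hp hmem
    have h1 : c - 1 = b.1 - 1 := congrArg Prod.fst this
    have h2 : j = b.2 := congrArg Prod.snd this
    have hc1 : c = b.1 := by omega
    have : b = (c, j) := Prod.ext hc1.symm h2.symm
    rw [this] at hbR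
    exact hnot hbR
  · have hb10 : b.1 = 0 := by omega
    refine ⟨b.2, bound2 L k cov hbR, ?_, ?_⟩
    · have : b = ((0:ℕ), b.2) := Prod.ext hb10 rfl
      rwa [← this]
    · have heq : (((c:ℤ), (j:ℤ) - (b.2:ℤ)) : ℤ × ℤ) = -(em b - em (c, j)) := by
        simp only [em, Prod.ext_iff, Prod.fst_sub, Prod.snd_sub, Prod.fst_neg, Prod.snd_neg]
        constructor
        · rw [hb10]; push_cast; ring
        · push_cast; ring
      rw [heq]; exact neg_mem hbm

/-- the main structure theorem: bound on the index -/
theorem upper_bound : 3 * L.index ≤ (k + 2) ^ 2 := by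
  classical
  set w := ww L k cov with hw
  set h := hh L k cov with hhdef
  -- the vector λ = (-x, h)
  obtain ⟨x, hxw, hxR, hlam⟩ := nu_col L k cov (ww_pos L k cov) (hh_pos L k cov)
    (hh_not_mem L k cov) (by
      have : h - 1 < h := by have := hh_pos L k cov; omega
      exact col_mem L k cov this)
  -- λ : ((0:ℤ) - x, h) ∈ L
  obtain ⟨y, hyh, hyR, hmu⟩ := nu_row L k cov (hh_pos L k cov) (ww_pos L k cov)
    (ww_not_mem L k cov) (by
      have : w - 1 < w := by have := ww_pos L k cov; omega
      exact row_mem L k cov this)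
  -- hlam : ((0:ℤ) - x, (h:ℤ)) ∈ L, hmu : ((w:ℤ), (0:ℤ) - y) ∈ L
  -- Fact B : for i with i + x ≤ w - 1, (i, h-1) ∈ RR
  have factB : ∀ i : ℕ, i + x + 1 ≤ w → (i, h - 1) ∈ RR L k cov := by
    intro i hix
    by_contra hcon
    have hiw : i < w := by omega
    have hex : ∃ c : ℕ, (i, c) ∉ RR L k cov := ⟨h - 1, hcon⟩
    set c := Nat.find hex with hcdef
    have hcnot : (i, c) ∉ RR L k cov := Nat.find_spec hex
    have hcmin : ∀ c' < c, (i, c') ∈ RR L k cov := fun c' hc' => not_not.mp (Nat.find_min hex hc')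
    have hcle : c ≤ h - 1 := Nat.find_le hcon
    have hcpos : 0 < c := by
      rcases Nat.eq_zero_or_pos c with h0 | h0
      · exfalso; apply hcnot; rw [h0]; exact row_mem L k cov hiw
      · exact h0
    have hbelow : (i, c - 1) ∈ RR L k cov := hcmin _ (by omega)
    obtain ⟨t, htw, htR, hnu⟩ := nu_col L k cov hiw hcpos hcnot hbelow
    have hch : c < h := by have := hh_pos L k cov; omega
    by_cases hcase : t ≤ i + x
    · -- cells A = (i + x - t, 0), B = (0, h - c); B - A = λ - ν ∈ L
      have hA : (i + x - t, (0:ℕ)) ∈ RR L k cov := row_mem L k cov (by omega)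
      have hB : ((0:ℕ), h - c) ∈ RR L k cov := col_mem L k cov (by omega)
      have hmem : em ((0:ℕ), h - c) - em (i + x - t, (0:ℕ)) ∈ L := by
        have heq : em ((0:ℕ), h - c) - em (i + x - t, (0:ℕ))
            = (((0:ℤ) - x, (h:ℤ)) : ℤ × ℤ) - ((i:ℤ) - (t:ℤ), (c:ℤ)) := by
          simp only [em, Prod.ext_iff, Prod.fst_sub, Prod.snd_sub]
          constructor
          · push_cast [Nat.cast_sub (show t ≤ i + x by omega)]; ring
          · push_cast [Nat.cast_sub (show c ≤ h by omega)]; ring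
        rw [heq]; exact sub_mem hlam hnu
      have := RR_unique L k cov hB hA hmem
      simp only [Prod.mk.injEq] at this
      omega
    · -- cells A = (t - i, 0), B = (0, c); B - A = ν... (i - t, c) = -(A - B)
      have hA : (t - i, (0:ℕ)) ∈ RR L k cov := row_mem L k cov (by omega)
      have hB : ((0:ℕ), c) ∈ RR L k cov := col_mem L k cov hch
      have hmem : em ((0:ℕ), c) - em (t - i, (0:ℕ)) ∈ L := by
        have heq : em ((0:ℕ), c) - em (t - i, (0:ℕ))
            = (((i:ℤ) - (t:ℤ), (c:ℤ)) : ℤ × ℤ) := by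
          simp only [em, Prod.ext_iff, Prod.fst_sub, Prod.snd_sub]
          constructor
          · push_cast [Nat.cast_sub (show i ≤ t by omega)]; ring
          · push_cast; ring
        rw [heq]; exact hnu
      have := RR_unique L k cov hB hA hmem
      simp only [Prod.mk.injEq] at this
      omega
  have factA : ∀ j : ℕ, j + y + 1 ≤ h → (w - 1, j) ∈ RR L k cov := by
    intro j hjy
    by_contra hcon
    have hjh : j < h := by omega
    have hex : ∃ c : ℕ, (c, j) ∉ RR L k cov := ⟨w - 1, hcon⟩
    set c := Nat.find hex with hcdef
    have hcnot : (c, j) ∉ RR L k cov := Nat.find_spec hex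
    have hcmin : ∀ c' < c, (c', j) ∈ RR L k cov := fun c' hc' => not_not.mp (Nat.find_min hex hc')
    have hcle : c ≤ w - 1 := Nat.find_le hcon
    have hcpos : 0 < c := by
      rcases Nat.eq_zero_or_pos c with h0 | h0
      · exfalso; apply hcnot; rw [h0]; exact col_mem L k cov hjh
      · exact h0
    have hbelow : (c - 1, j) ∈ RR L k cov := hcmin _ (by omega)
    obtain ⟨u, huh, huR, hnu⟩ := nu_row L k cov hjh hcpos hcnot hbelow
    have hcw : c < w := by have := ww_pos L k cov; omega
    by_cases hcase : u ≤ j + y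
    · have hA : ((0:ℕ), j + y - u) ∈ RR L k cov := col_mem L k cov (by omega)
      have hB : (w - c, (0:ℕ)) ∈ RR L k cov := row_mem L k cov (by omega)
      have hmem : em (w - c, (0:ℕ)) - em ((0:ℕ), j + y - u) ∈ L := by
        have heq : em (w - c, (0:ℕ)) - em ((0:ℕ), j + y - u)
            = (((w:ℤ), (0:ℤ) - y) : ℤ × ℤ) - ((c:ℤ), (j:ℤ) - (u:ℤ)) := by
          simp only [em, Prod.ext_iff, Prod.fst_sub, Prod.snd_sub]
          constructor
          · push_cast [Nat.cast_sub (show c ≤ w by omega)]; ring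
          · push_cast [Nat.cast_sub (show u ≤ j + y by omega)]; ring
        rw [heq]; exact sub_mem hmu hnu
      have := RR_unique L k cov hB hA hmem
      simp only [Prod.mk.injEq] at this
      omega
    · have hA : ((0:ℕ), u - j) ∈ RR L k cov := col_mem L k cov (by omega)
      have hB : (c, (0:ℕ)) ∈ RR L k cov := row_mem L k cov hcw
      have hmem : em (c, (0:ℕ)) - em ((0:ℕ), u - j) ∈ L := by
        have heq : em (c, (0:ℕ)) - em ((0:ℕ), u - j)
            = (((c:ℤ), (j:ℤ) - (u:ℤ)) : ℤ × ℤ) := by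
          simp only [em, Prod.ext_iff, Prod.fst_sub, Prod.snd_sub]
          constructor
          · push_cast; ring
          · push_cast [Nat.cast_sub (show j ≤ u by omega)]; ring
        rw [heq]; exact hnu
      have := RR_unique L k cov hB hA hmem
      simp only [Prod.mk.injEq] at this
      omega
  -- corner inequalities
  have corner1 : w + h ≤ k + 2 + x := by
    have hmem := factB (w - 1 - x) (by omega)
    have := RR_sum_le L k cov hmem
    simp only at this
    have hhp := hh_pos L k cov
    have hwp := ww_pos L k cov
    omega
  have corner2 : w + h ≤ k + 2 + y := by
    have hmem := factA (h - 1 - y) (by omega)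
    have := RR_sum_le L k cov hmem
    simp only at this
    have hhp := hh_pos L k cov
    have hwp := ww_pos L k cov
    omega
  -- the excluded rectangle
  have notrect : ∀ a : ℕ × ℕ, a ∈ RR L k cov → ¬(w - x ≤ a.1 ∧ h - y ≤ a.2) := by
    rintro a ha ⟨ha1, ha2⟩
    have hmem0 : (w - x, h - y) ∈ RR L k cov := downTo L k cov ha ha1 ha2
    have h00 : ((0:ℕ), (0:ℕ)) ∈ RR L k cov := zero_mem_RR L k cov
    have hmem : em (w - x, h - y) - em ((0:ℕ), (0:ℕ)) ∈ L := by
      have heq : em (w - x, h - y) - em ((0:ℕ), (0:ℕ))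
          = (((0:ℤ) - x, (h:ℤ)) : ℤ × ℤ) + (((w:ℤ), (0:ℤ) - y) : ℤ × ℤ) := by
        simp only [em, Prod.ext_iff, Prod.fst_sub, Prod.snd_sub, Prod.fst_add, Prod.snd_add]
        constructor
        · push_cast [Nat.cast_sub (show x ≤ w from le_of_lt hxw)]; ring
        · push_cast [Nat.cast_sub (show y ≤ h from le_of_lt hyh)]; ring
      rw [heq]; exact add_mem hlam hmu
    have := RR_unique L k cov hmem0 h00 hmem
    simp only [Prod.mk.injEq] at this
    omega
  -- counting
  set S : Finset (ℕ × ℕ) :=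
    (Finset.range w ×ˢ Finset.range h) \ (Finset.Ico (w - x) w ×ˢ Finset.Ico (h - y) h) with hS
  have hsub : RR L k cov ⊆ ↑S := by
    intro a ha
    simp only [hS, Finset.coe_sdiff, Set.mem_diff, Finset.coe_product, Set.mem_prod,
      Finset.mem_coe, Finset.mem_range, Finset.mem_Ico]
    constructor
    · exact ⟨bound1 L k cov ha, bound2 L k cov ha⟩
    · intro hcon
      exact notrect a ha ⟨hcon.1.1, hcon.2.1⟩
  have hrect_sub : (Finset.Ico (w - x) w ×ˢ Finset.Ico (h - y) h) ⊆
      (Finset.range w ×ˢ Finset.range h) := by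
    intro a ha
    simp only [Finset.mem_product, Finset.mem_Ico, Finset.mem_range] at ha ⊢
    omega
  have hcardS : S.card = w * h - x * y := by
    rw [hS, Finset.card_sdiff_of_subset hrect_sub]
    simp only [Finset.card_product, Finset.card_range, Nat.card_Ico]
    congr 1
    have : w - (w - x) = x := by omega
    have h2 : h - (h - y) = y := by omega
    rw [this, h2]
  -- index = card RR
  have hindex : L.index = (RR L k cov).ncard := by
    have hbij : Function.Bijective (fun a : RR L k cov => (QuotientAddGroup.mk (em a) : (ℤ×ℤ) ⧸ L)) := by
      constructor
      · rintro ⟨a, ha⟩ ⟨b, hb⟩ hab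
        simp only [Subtype.mk.injEq]
        apply RR_unique L k cov ha hb
        have := QuotientAddGroup.eq.mp hab
        have heq : em a - em b = -(-(em a) + em b) := by ring
        rw [heq]; exact neg_mem this
      · intro q
        induction q using QuotientAddGroup.induction_on with
        | H p =>
          refine ⟨⟨rep L k cov p, rep_mem_RR L k cov p⟩, ?_⟩
          apply QuotientAddGroup.eq.mpr
          have := (rep_spec L k cov p).1
          have heq : -(em (rep L k cov p)) + p = -(em (rep L k cov p) - p) := by ring
          rw [heq]; exact neg_mem this
    have : L.index = Nat.card ((ℤ×ℤ) ⧸ L) := rfl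
    rw [this, ← Nat.card_congr (Equiv.ofBijective _ hbij), Nat.card_coe_set_eq]
  have hcount : L.index ≤ w * h - x * y := by
    rw [hindex, ← hcardS, ← Set.ncard_coe_finset S]
    exact Set.ncard_le_ncard hsub (Finset.finite_toSet S)
  -- final arithmetic
  have hxy_le : x * y ≤ w * h := Nat.mul_le_mul (by omega) (by omega)
  have hkey : L.index + x * y ≤ w * h := by omega
  -- cast to ℤ
  have hwp := ww_pos L k cov
  have hhp := hh_pos L k cov
  zify at hkey corner1 corner2 hxw hyh ⊢
  rcases le_or_gt ((w:ℤ) + h) (k + 2) with hcase | hcase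
  · nlinarith [sq_nonneg ((w:ℤ) - h), sq_nonneg ((w:ℤ) + h), mul_nonneg (Int.ofNat_nonneg x) (Int.ofNat_nonneg y)]
  · have hcx : (w:ℤ) + h - (k + 2) ≤ x := by omega
    have hcy : (w:ℤ) + h - (k + 2) ≤ y := by omega
    have hc0 : (0:ℤ) ≤ (w:ℤ) + h - (k + 2) := by omega
    have hprod : ((w:ℤ) + h - (k + 2)) * ((w:ℤ) + h - (k + 2)) ≤ (x:ℤ) * y :=
      mul_le_mul hcx hcy hc0 (by positivity)
    nlinarith [sq_nonneg (3*((w:ℤ) + h) - 4*(k + 2)), sq_nonneg ((w:ℤ) - h)]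

end WithCov
end Upper



section Construction

variable (f D : ℕ) (s : ℤ)

def phi : (ℤ × ℤ) →+ ZMod f × ZMod (f * D) where
  toFun p := (((p.2 : ℤ) : ZMod f), (((f : ℤ) * p.1 - s * p.2 : ℤ) : ZMod (f * D)))
  map_zero' := by simp
  map_add' p q := by
    simp only [Prod.fst_add, Prod.snd_add, Prod.mk_add_mk, Prod.mk.injEq]
    constructor
    · push_cast; ring
    · push_cast; ring

def Lat : AddSubgroup (ℤ × ℤ) := (phi f D s).ker

lemma mem_Lat (p : ℤ × ℤ) :
    p ∈ Lat f D s ↔ (f : ℤ) ∣ p.2 ∧ ((f : ℤ) * (D : ℤ)) ∣ ((f : ℤ) * p.1 - s * p.2) := by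
  rw [Lat, AddMonoidHom.mem_ker, phi]
  simp only [AddMonoidHom.coe_mk, ZeroHom.coe_mk, Prod.mk_eq_zero]
  rw [ZMod.intCast_zmod_eq_zero_iff_dvd, ZMod.intCast_zmod_eq_zero_iff_dvd]
  push_cast
  rfl

lemma dvd_small {n d : ℤ} (h : n ∣ d) (h1 : -n < d) (h2 : d < n) : d = 0 := by
  rcases h with ⟨c, rfl⟩
  rcases lt_trichotomy c 0 with hc|hc|hc
  · nlinarith
  · simp [hc]
  · nlinarith

lemma Lat_index (hf : 0 < f) (hD : 0 < D) : (Lat f D s).index = f * D := by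
  haveI : NeZero f := ⟨by omega⟩
  haveI : NeZero D := ⟨by omega⟩
  set g : ZMod f × ZMod D → (ℤ × ℤ) ⧸ (Lat f D s) :=
    fun uv => QuotientAddGroup.mk (((uv.2.val : ℤ), (uv.1.val : ℤ)) : ℤ × ℤ) with hg
  have hbij : Function.Bijective g := by
    constructor
    · rintro ⟨u, v⟩ ⟨u', v'⟩ huv
      simp only [hg] at huv
      have hmem := QuotientAddGroup.eq.mp huv
      rw [show -(((v.val : ℤ), (u.val : ℤ)) : ℤ × ℤ) + ((v'.val : ℤ), (u'.val : ℤ))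
          = (((v'.val : ℤ) - v.val, (u'.val : ℤ) - u.val) : ℤ × ℤ) by
        simp [Prod.ext_iff]; constructor <;> ring] at hmem
      rw [mem_Lat] at hmem
      dsimp only at hmem
      obtain ⟨h1, h2⟩ := hmem
      have hu : (u'.val : ℤ) - u.val = 0 := by
        apply dvd_small h1
        · have := ZMod.val_lt u; have := ZMod.val_lt u'
          push_cast; omega
        · have := ZMod.val_lt u; have := ZMod.val_lt u'
          push_cast; omega
      have huval : u.val = u'.val := by omega
      have hu' : u = u' := by
        have e1 := ZMod.natCast_rightInverse (n := f) u
        have e2 := ZMod.natCast_rightInverse (n := f) u'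
        rw [← e1, ← e2, huval]
      rw [hu, mul_zero, sub_zero] at h2
      have h2' : (D : ℤ) ∣ ((v'.val : ℤ) - v.val) := by
        rcases h2 with ⟨c, hc⟩
        refine ⟨c, ?_⟩
        have hfne : (f : ℤ) ≠ 0 := by positivity
        have : (f : ℤ) * ((v'.val : ℤ) - v.val) = (f : ℤ) * ((D : ℤ) * c) := by
          rw [hc]; ring
        exact mul_left_cancel₀ hfne this
      have hv : (v'.val : ℤ) - v.val = 0 := by
        apply dvd_small h2'
        · have := ZMod.val_lt v; have := ZMod.val_lt v'
          push_cast; omega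
        · have := ZMod.val_lt v; have := ZMod.val_lt v'
          push_cast; omega
      have hvval : v.val = v'.val := by omega
      have hv' : v = v' := by
        have e1 := ZMod.natCast_rightInverse (n := D) v
        have e2 := ZMod.natCast_rightInverse (n := D) v'
        rw [← e1, ← e2, hvval]
      rw [hu', hv']
    · intro q
      induction q using QuotientAddGroup.induction_on with
      | H p =>
        obtain ⟨a, b⟩ := p
        set u : ZMod f := ((b : ℤ) : ZMod f) with hu
        have hfb : (f : ℤ) ∣ b - (u.val : ℤ) := by
          rw [← ZMod.intCast_zmod_eq_zero_iff_dvd]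
          push_cast
          simp [hu, ZMod.natCast_val, ZMod.intCast_cast]
        set c : ℤ := (b - (u.val : ℤ)) / f with hc
        have hbc : b - (u.val : ℤ) = (f : ℤ) * c := (Int.mul_ediv_cancel' hfb).symm
        set v : ZMod D := ((a - s * c : ℤ) : ZMod D) with hv
        have hDv : (D : ℤ) ∣ (a - s * c) - (v.val : ℤ) := by
          rw [← ZMod.intCast_zmod_eq_zero_iff_dvd]
          push_cast
          simp [hv, ZMod.natCast_val, ZMod.intCast_cast]
        refine ⟨(u, v), ?_⟩
        simp only [hg]
        apply QuotientAddGroup.eq.mpr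
        rw [show -(((v.val : ℤ), (u.val : ℤ)) : ℤ × ℤ) + ((a, b) : ℤ × ℤ)
            = ((a - (v.val : ℤ), b - (u.val : ℤ)) : ℤ × ℤ) by
          simp [Prod.ext_iff]; constructor <;> ring]
        rw [mem_Lat]
        constructor
        · exact hfb
        · have expand : (f : ℤ) * (a - (v.val : ℤ)) - s * (b - (u.val : ℤ))
              = (f : ℤ) * ((a - s * c) - (v.val : ℤ)) := by
            rw [hbc]; ring
          rw [expand]
          exact mul_dvd_mul_left _ hDv
  have h1 : (Lat f D s).index = Nat.card ((ℤ × ℤ) ⧸ (Lat f D s)) := rfl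
  rw [h1, ← Nat.card_congr (Equiv.ofBijective g hbij)]
  simp [Nat.card_prod, mul_comm]

lemma Lat_cover (k : ℕ) (hf : 0 < f) (hD : 0 < D)
    (H : ∀ y0 x1 : ℤ, 0 ≤ y0 → y0 < f → 0 ≤ x1 → x1 < D →
      ∃ r i : ℤ, 0 ≤ r ∧ 0 ≤ i ∧ i + (y0 + r * f) ≤ (k : ℤ) ∧ (D : ℤ) ∣ (x1 + s * r - i)) :
    ∀ p : ℤ × ℤ, ∃ q : ℤ × ℤ, 0 ≤ q.1 ∧ 0 ≤ q.2 ∧ q.1 + q.2 ≤ (k : ℤ) ∧ p - q ∈ Lat f D s := by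
  rintro ⟨a, b⟩
  have hfz : (0:ℤ) < (f:ℤ) := by positivity
  have hDz : (0:ℤ) < (D:ℤ) := by positivity
  set y0 : ℤ := b % f with hy0
  have hy0n : 0 ≤ y0 := Int.emod_nonneg b (by omega)
  have hy0l : y0 < f := Int.emod_lt_of_pos b hfz
  set A : ℤ := a - s * (b / f) with hA
  set x1 : ℤ := A % D with hx1
  have hx1n : 0 ≤ x1 := Int.emod_nonneg A (by omega)
  have hx1l : x1 < D := Int.emod_lt_of_pos A hDz
  obtain ⟨r, i, hr, hi, hsum, hdvd⟩ := H y0 x1 hy0n hy0l hx1n hx1l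
  refine ⟨(i, y0 + r * f), hi, by positivity, by omega, ?_⟩
  rw [show ((a, b) : ℤ × ℤ) - (i, y0 + r * f) = ((a - i, b - (y0 + r * f)) : ℤ × ℤ) from rfl]
  rw [mem_Lat]
  have hb : b - y0 = (f : ℤ) * (b / f) := by
    rw [hy0]; linarith [Int.emod_add_mul_ediv b f]
  constructor
  · refine ⟨b / f - r, ?_⟩
    rw [show b - (y0 + r * f) = (b - y0) - r * f by ring, hb]; ring
  · have expand : (f : ℤ) * (a - i) - s * (b - (y0 + r * f))
        = (f : ℤ) * ((A - x1) + (x1 + s * r - i)) := by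
      rw [show b - (y0 + r * f) = (b - y0) - r * f by ring, hb, hA]; ring
    rw [expand]
    apply mul_dvd_mul_left
    apply dvd_add
    · refine ⟨A / D, ?_⟩
      rw [hx1]; linarith [Int.emod_add_mul_ediv A D]
    · exact hdvd


theorem exists_lat (k : ℕ) :
    ∃ L : AddSubgroup (ℤ × ℤ), L.index = (k + 2) ^ 2 / 3 ∧ L.index ≠ 0 ∧
      ∀ p : ℤ × ℤ, ∃ q : ℤ × ℤ, 0 ≤ q.1 ∧ 0 ≤ q.2 ∧ q.1 + q.2 ≤ (k : ℤ) ∧ p - q ∈ L := by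
  set m := k + 2 with hm
  set t := m / 3 with ht
  have hlt : m % 3 = 0 ∨ m % 3 = 1 ∨ m % 3 = 2 := by omega
  rcases hlt with h3 | h3 | h3
  · -- m = 3t
    have hmt : m = 3 * t := by omega
    have htpos : 0 < t := by omega
    refine ⟨Lat t (3 * t) (t : ℤ), ?_, ?_, ?_⟩
    · rw [Lat_index _ _ _ htpos (by omega)]
      have h2 : m ^ 2 = 3 * (t * (3 * t)) := by rw [hmt]; ring
      omega
    · rw [Lat_index _ _ _ htpos (by omega)]
      positivity
    · apply Lat_cover _ _ _ _ htpos (by omega)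
      intro y0 x1 hy0n hy0l hx1n hx1l
      have hkz : (k : ℤ) = 3 * (t : ℤ) - 2 := by
        have : (m : ℤ) = 3 * (t : ℤ) := by exact_mod_cast hmt
        omega
      push_cast at hy0l hx1l
      by_cases hcase : x1 + y0 ≤ (k : ℤ)
      · exact ⟨0, x1, le_refl 0, hx1n, by omega, ⟨0, by push_cast; ring⟩⟩
      · refine ⟨1, x1 - 2 * (t : ℤ), by norm_num, by omega, by omega, ⟨1, by push_cast; ring⟩⟩
  · -- m = 3t + 1
    have hmt : m = 3 * t + 1 := by omega
    have htpos : 0 < t := by omega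
    refine ⟨Lat t (3 * t + 2) ((t : ℤ) + 1), ?_, ?_, ?_⟩
    · rw [Lat_index _ _ _ htpos (by omega)]
      have h2 : m ^ 2 = 3 * (t * (3 * t + 2)) + 1 := by rw [hmt]; ring
      omega
    · rw [Lat_index _ _ _ htpos (by omega)]
      positivity
    · apply Lat_cover _ _ _ _ htpos (by omega)
      intro y0 x1 hy0n hy0l hx1n hx1l
      have hkz : (k : ℤ) = 3 * (t : ℤ) - 1 := by
        have : (m : ℤ) = 3 * (t : ℤ) + 1 := by exact_mod_cast hmt
        omega
      push_cast at hy0l hx1l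
      by_cases hcase : x1 + y0 ≤ (k : ℤ)
      · exact ⟨0, x1, le_refl 0, hx1n, by omega, ⟨0, by push_cast; ring⟩⟩
      · refine ⟨1, x1 - (2 * (t : ℤ) + 1), by norm_num, by omega, by omega,
          ⟨1, by push_cast; ring⟩⟩
  · -- m = 3t + 2
    have hmt : m = 3 * t + 2 := by omega
    refine ⟨Lat (t + 1) (3 * t + 1) (t : ℤ), ?_, ?_, ?_⟩
    · rw [Lat_index _ _ _ (by omega) (by omega)]
      have h2 : m ^ 2 = 3 * ((t + 1) * (3 * t + 1)) + 1 := by rw [hmt]; ring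
      omega
    · rw [Lat_index _ _ _ (by omega) (by omega)]
      positivity
    · apply Lat_cover _ _ _ _ (by omega) (by omega)
      intro y0 x1 hy0n hy0l hx1n hx1l
      have hkz : (k : ℤ) = 3 * (t : ℤ) := by
        have : (m : ℤ) = 3 * (t : ℤ) + 2 := by exact_mod_cast hmt
        omega
      push_cast at hy0l hx1l
      by_cases hcase : x1 + y0 ≤ (k : ℤ)
      · exact ⟨0, x1, le_refl 0, hx1n, by omega, ⟨0, by push_cast; ring⟩⟩
      · refine ⟨1, x1 - (2 * (t : ℤ) + 1), by norm_num, by omega, by omega,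
          ⟨1, by push_cast; ring⟩⟩

end Construction



section Glue

def toPair : (Fin 2 → ℤ) →+ ℤ × ℤ where
  toFun v := (v 0, v 1)
  map_zero' := rfl
  map_add' _ _ := rfl

def toVec : (ℤ × ℤ) →+ (Fin 2 → ℤ) where
  toFun p := ![p.1, p.2]
  map_zero' := by
    funext i; fin_cases i <;> simp
  map_add' p q := by
    funext i; fin_cases i <;> simp

lemma toVec_pair (q : ℤ × ℤ) : toVec q = ![q.1, q.2] := rfl

lemma toVec_apply (v : Fin 2 → ℤ) : toVec (v 0, v 1) = v := by
  funext i; fin_cases i <;> simp [toVec_pair]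

lemma toPair_apply (p : ℤ × ℤ) : toPair (![p.1, p.2]) = p := by
  show ((![p.1, p.2] : Fin 2 → ℤ) 0, (![p.1, p.2] : Fin 2 → ℤ) 1) = p
  simp

lemma toPair_surj : Function.Surjective toPair :=
  fun p => ⟨![p.1, p.2], toPair_apply p⟩

lemma toVec_surj : Function.Surjective toVec :=
  fun v => ⟨(v 0, v 1), toVec_apply v⟩

end Glue

end Stmt12

/-- The largest possible index `[ℤ² : L]` over finite-index subgroups
`L ≤ ℤ²` with `S'_{2,k} + L = ℤ²` is exactly `⌊(k+2)²/3⌋`, and it is attained. -/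
theorem stmt12 (k : ℕ) :
    IsGreatest {n : ℕ | ∃ L : AddSubgroup (Fin 2 → ℤ), L.index = n ∧ L.index ≠ 0 ∧
        ∀ x : Fin 2 → ℤ, ∃ s : Fin 2 → ℤ, (∀ i, 0 ≤ s i) ∧ (∑ i, s i) ≤ (k : ℤ) ∧
          x - s ∈ L}
      ((k + 2) ^ 2 / 3) := by
  constructor
  · -- the maximum is attained
    obtain ⟨L2, hidx, hne, hcov⟩ := Stmt12.exists_lat k
    refine ⟨L2.comap Stmt12.toPair, ?_, ?_, ?_⟩
    · rw [AddSubgroup.index_comap,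
        AddMonoidHom.range_eq_top.mpr Stmt12.toPair_surj,
        AddSubgroup.relIndex_top_right]
      exact hidx
    · rw [AddSubgroup.index_comap,
        AddMonoidHom.range_eq_top.mpr Stmt12.toPair_surj,
        AddSubgroup.relIndex_top_right]
      exact hne
    · intro x
      obtain ⟨q, hq1, hq2, hq3, hqL⟩ := hcov (x 0, x 1)
      refine ⟨![q.1, q.2], ?_, ?_, ?_⟩
      · intro i; fin_cases i <;> simpa
      · rw [Fin.sum_univ_two]
        simpa using hq3
      · rw [AddSubgroup.mem_comap]
        have : Stmt12.toPair (x - ![q.1, q.2]) = (x 0, x 1) - q := by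
          rw [map_sub, Stmt12.toPair_apply]
          show ((x 0, x 1) : ℤ × ℤ) - q = _
          rfl
        rw [this]
        exact hqL
  · -- upper bound
    rintro n ⟨L, hLidx, hLne, hLcov⟩
    set L2 := L.comap Stmt12.toVec with hL2
    have hcov2 : ∀ p : ℤ × ℤ, ∃ q : ℤ × ℤ, 0 ≤ q.1 ∧ 0 ≤ q.2 ∧ q.1 + q.2 ≤ (k : ℤ) ∧
        p - q ∈ L2 := by
      intro p
      obtain ⟨s, hs1, hs2, hs3⟩ := hLcov (Stmt12.toVec p)
      refine ⟨(s 0, s 1), hs1 0, hs1 1, by rwa [Fin.sum_univ_two] at hs2, ?_⟩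
      rw [hL2, AddSubgroup.mem_comap, map_sub]
      have : Stmt12.toVec (s 0, s 1) = s := Stmt12.toVec_apply s
      rw [this]
      exact hs3
    have hub := Stmt12.upper_bound L2 k hcov2
    have hidx2 : L2.index = L.index := by
      rw [hL2, AddSubgroup.index_comap,
        AddMonoidHom.range_eq_top.mpr Stmt12.toVec_surj,
        AddSubgroup.relIndex_top_right]
    rw [hidx2, hLidx] at hub
    rw [Nat.le_div_iff_mul_le (by norm_num : 0 < 3)]
    omega
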